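/- Given a regular NAP function P taking values in a non-Archimedean ordered field extension K of ℝ, define C(B, A) = st(P(B ∩ A)/P(A)) for nonempty A, where st denotes the standard part (the unique real infinitesimally close to a finite element of K). Then C satisfies the multiplication axiom of Popper functions: C(A ∩ B, D) = C(A, D) · C(B, A ∩ D) for all A, B and all nonempty D with A ∩ D nonempty. -/

import Mathlib

/-- Standard part is multiplicative on elements of `[0,1] ⊆ K`. -/
lemma aux_st_mul {K : Type*} [Field K] [LinearOrder K] [IsStrictOrderedRing K]
    (ι : ℝ →+* K) (hι : StrictMono ι)
    (st : K → ℝ)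
    (hst : ∀ x : K, (∃ n : ℕ, |x| ≤ ι n) →
      ∀ m : ℕ, 0 < m → |x - ι (st x)| < ι (1 / m))
    (x y : K) (hx0 : 0 ≤ x) (hx1 : x ≤ 1) (hy0 : 0 ≤ y) (hy1 : y ≤ 1) :
    st (x * y) = st x * st y := by
  have habs : ∀ r : ℝ, ι |r| = |ι r| := by
    intro r
    rcases le_total 0 r with h | h
    · rw [abs_of_nonneg h, abs_of_nonneg (by rw [← map_zero ι]; exact hι.monotone h)]
    · rw [abs_of_nonpos h, abs_of_nonpos (by rw [← map_zero ι]; exact hι.monotone h), map_neg]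
  have hfin : ∀ z : K, 0 ≤ z → z ≤ 1 → ∃ n : ℕ, |z| ≤ ι n := by
    intro z h0 h1
    exact ⟨1, by rw [abs_of_nonneg h0]; simpa using h1⟩
  have hxy0 : 0 ≤ x * y := mul_nonneg hx0 hy0
  have hxy1 : x * y ≤ 1 := by
    calc x * y ≤ 1 * 1 := mul_le_mul hx1 hy1 hy0 zero_le_one
    _ = 1 := one_mul 1
  have hx := hst x (hfin x hx0 hx1)
  have hy := hst y (hfin y hy0 hy1)
  have hxyst := hst (x * y) (hfin _ hxy0 hxy1)
  -- bound on |ι (st y)|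
  have hy1' : |y - ι (st y)| < 1 := by simpa using hy 1 one_pos
  have h2K : (ι 2 : K) = 1 + 1 := by
    rw [show (2:ℝ) = 1 + 1 by norm_num, map_add, map_one]
  have hsy : |ι (st y)| ≤ ι 2 := by
    have t1 : |ι (st y)| - |y| ≤ |ι (st y) - y| := abs_sub_abs_le_abs_sub _ _
    have t2 : |ι (st y) - y| = |y - ι (st y)| := abs_sub_comm _ _
    have t3 : |y| ≤ 1 := by rw [abs_of_nonneg hy0]; exact hy1
    rw [h2K]; linarith
  have key : ∀ m : ℕ, 0 < m → |st (x * y) - st x * st y| < 1 / m := by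
    intro m hm
    have hm4 : 0 < 4 * m := by positivity
    have h1 := hxyst (4 * m) hm4
    have h2 := hx (4 * m) hm4
    have h3 := hy (4 * m) hm4
    push_cast at h1 h2 h3
    have h2nn : (0:K) ≤ ι 2 := by rw [h2K]; linarith [zero_le_one (α := K)]
    have hax : |x| ≤ 1 := by rw [abs_of_nonneg hx0]; exact hx1
    have hb : |x * y - ι (st x * st y)| ≤ ι (1 / (4 * (m:ℝ))) + ι 2 * ι (1 / (4 * (m:ℝ))) := by
      have e : x * y - ι (st x * st y)
          = x * (y - ι (st y)) + ι (st y) * (x - ι (st x)) := by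
        rw [map_mul]; ring
      rw [e]
      calc |x * (y - ι (st y)) + ι (st y) * (x - ι (st x))|
          ≤ |x * (y - ι (st y))| + |ι (st y) * (x - ι (st x))| := abs_add_le _ _
        _ = |x| * |y - ι (st y)| + |ι (st y)| * |x - ι (st x)| := by
            rw [abs_mul, abs_mul]
        _ ≤ 1 * ι (1 / (4 * (m:ℝ))) + ι 2 * ι (1 / (4 * (m:ℝ))) :=
            add_le_add (mul_le_mul hax h3.le (abs_nonneg _) zero_le_one)
              (mul_le_mul hsy h2.le (abs_nonneg _) h2nn)
        _ = ι (1 / (4 * (m:ℝ))) + ι 2 * ι (1 / (4 * (m:ℝ))) := by rw [one_mul]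
    have hm' : (0:ℝ) < m := by exact_mod_cast hm
    have hsum : ι (1 / (4 * (m:ℝ))) + (ι (1 / (4 * (m:ℝ)))
        + ι 2 * ι (1 / (4 * (m:ℝ)))) = ι (1 / m) := by
      rw [← map_mul, ← map_add, ← map_add]
      congr 1
      field_simp
      norm_num
    have hι4 : |ι (st (x * y)) - ι (st x * st y)| < ι (1 / m) := by
      have t := abs_sub_le (ι (st (x * y))) (x * y) (ι (st x * st y))
      have t2 : |ι (st (x * y)) - x * y| = |x * y - ι (st (x * y))| := abs_sub_comm _ _
      rw [t2] at t
      calc |ι (st (x * y)) - ι (st x * st y)|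
          ≤ |x * y - ι (st (x * y))| + |x * y - ι (st x * st y)| := t
        _ < ι (1 / (4 * (m:ℝ))) + (ι (1 / (4 * (m:ℝ)))
            + ι 2 * ι (1 / (4 * (m:ℝ)))) := by linarith
        _ = ι (1 / m) := hsum
    have : ι |st (x * y) - st x * st y| < ι (1 / m) := by
      rw [habs, map_sub]; exact hι4
    exact hι.lt_iff_lt.mp this
  by_contra h
  have hd : 0 < |st (x * y) - st x * st y| := abs_pos.mpr (sub_ne_zero.mpr h)
  obtain ⟨n, hn⟩ := exists_nat_one_div_lt hd
  have := key (n + 1) (Nat.succ_pos n)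
  push_cast at this hn
  linarith

/-- Multiplication axiom of Popper functions for `C(B, A) = st(P(B ∩ A)/P(A))`,
where `P` is a regular finitely additive non-Archimedean probability function. -/
theorem stmt4 {Ω : Type*} {K : Type*} [Field K] [LinearOrder K] [IsStrictOrderedRing K]
    (ι : ℝ →+* K) (hι : StrictMono ι)
    (P : Set Ω → K)
    (hadd : ∀ A B : Set Ω, Disjoint A B → P (A ∪ B) = P A + P B)
    (hnorm : P Set.univ = 1)
    (hreg : ∀ A : Set Ω, A.Nonempty → 0 < P A)
    (st : K → ℝ)
    -- `st x` is the real infinitesimally close to any finite `x`: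
    (hst : ∀ x : K, (∃ n : ℕ, |x| ≤ ι n) →
      ∀ m : ℕ, 0 < m → |x - ι (st x)| < ι (1 / m))
    (C : Set Ω → Set Ω → ℝ)
    (hC : ∀ A B : Set Ω, B.Nonempty → C A B = st (P (A ∩ B) / P B)) :
    ∀ A B D : Set Ω, D.Nonempty → (A ∩ D).Nonempty →
      C (A ∩ B) D = C A D * C B (A ∩ D) := by
  intro A B D hD hAD
  have hPempty : P ∅ = 0 := by
    have h := hadd ∅ ∅ (by simp)
    simp only [Set.union_empty] at h
    linarith
  have hnonneg : ∀ S : Set Ω, 0 ≤ P S := by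
    intro S
    rcases S.eq_empty_or_nonempty with h | h
    · rw [h, hPempty]
    · exact (hreg S h).le
  have hmono : ∀ S T : Set Ω, S ⊆ T → P S ≤ P T := by
    intro S T hST
    have h1 : P T = P S + P (T \ S) := by
      rw [← hadd S (T \ S) Set.disjoint_sdiff_right, Set.union_diff_cancel hST]
    rw [h1]
    linarith [hnonneg (T \ S)]
  have hDpos := hreg D hD
  have hADpos := hreg (A ∩ D) hAD
  set x := P (A ∩ D) / P D with hxdef
  set y := P (B ∩ (A ∩ D)) / P (A ∩ D) with hydef
  have hx0 : 0 ≤ x := div_nonneg (hnonneg _) hDpos.le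
  have hx1 : x ≤ 1 := (div_le_one hDpos).mpr (hmono _ _ Set.inter_subset_right)
  have hy0 : 0 ≤ y := div_nonneg (hnonneg _) hADpos.le
  have hy1 : y ≤ 1 := (div_le_one hADpos).mpr (hmono _ _ Set.inter_subset_right)
  have hset : (A ∩ B) ∩ D = B ∩ (A ∩ D) := by
    ext a; simp only [Set.mem_inter_iff]; tauto
  have hxy : P ((A ∩ B) ∩ D) / P D = x * y := by
    rw [hset, hxdef, hydef]
    field_simp
  rw [hC (A ∩ B) D hD, hC A D hD, hC B (A ∩ D) hAD, hxy]
  exact aux_st_mul ι hι st hst x y hx0 hx1 hy0 hy1
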